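/- Let M and N be unital C*-algebras and let φ : M → N be a positive linear map (not necessarily contractive). Then for every x ∈ M, φ(x)* ∘ φ(x) ≤ ‖φ‖ · φ(x* ∘ x), where a ∘ b = (ab + ba)/2. -/

import Mathlib

section Helpers

variable {A : Type*} [CStarAlgebra A] [PartialOrder A] [StarOrderedRing A]

lemma rsmul_nonneg {r : ℝ} (hr : 0 ≤ r) {a : A} (ha : 0 ≤ a) : 0 ≤ r • a := by
  rw [← cfc_smul_id (R := ℝ) r a (IsSelfAdjoint.of_nonneg ha)]
  exact cfc_nonneg fun t ht => by
    simpa using mul_nonneg hr (spectrum_nonneg_of_nonneg ha ht)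

lemma rsmul_mono {r : ℝ} (hr : 0 ≤ r) {a b : A} (hab : a ≤ b) : r • a ≤ r • b := by
  have := rsmul_nonneg hr (sub_nonneg.2 hab)
  rwa [smul_sub, sub_nonneg] at this

lemma rsmul_cancel {r : ℝ} (hr : 0 < r) {a b : A} (h : r • a ≤ r • b) : a ≤ b := by
  have := rsmul_mono (le_of_lt (inv_pos.2 hr)) h
  rwa [inv_smul_smul₀ hr.ne', inv_smul_smul₀ hr.ne'] at this

lemma expand_conj (b p : A) (t : ℝ) (hb : star b = b) (hp : star p = p) :
    (b - t • 1) * p * star (b - t • 1)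
      = b * p * b - t • (b * p + p * b) + (t * t) • p := by
  rw [star_sub, star_smul, star_one, hb, star_trivial]
  simp only [sub_mul, mul_sub, smul_mul_assoc, mul_smul_comm, one_mul, mul_one, smul_smul,
    smul_add, smul_sub]
  abel

lemma key_cs {n : ℕ} (p : ℕ → A) (lam : ℕ → ℝ) {k : ℝ} (hk : 0 < k)
    (hp : ∀ i ∈ Finset.range n, 0 ≤ p i)
    (hsum : ∑ i ∈ Finset.range n, p i ≤ k • 1) :
    (∑ i ∈ Finset.range n, lam i • p i) ^ 2
      ≤ k • ∑ i ∈ Finset.range n, (lam i) ^ 2 • p i := by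
  set s := Finset.range n with hs
  set b := ∑ i ∈ s, lam i • p i with hbdef
  have hpsa : ∀ i ∈ s, star (p i) = p i := fun i hi => (IsSelfAdjoint.of_nonneg (hp i hi))
  have hb : star b = b := by
    rw [hbdef, star_sum]
    exact Finset.sum_congr rfl fun i hi => by rw [star_smul, star_trivial, hpsa i hi]
  have step : ∀ i ∈ s,
      0 ≤ b * p i * b - (k * lam i) • (b * p i + p i * b) + ((k * lam i) * (k * lam i)) • p i := by
    intro i hi
    have h0 : 0 ≤ (b - (k * lam i) • 1) * p i * star (b - (k * lam i) • 1) :=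
      star_right_conjugate_nonneg (hp i hi) _
    rwa [expand_conj b (p i) (k * lam i) hb (hpsa i hi)] at h0
  have hsum2 : 0 ≤ ∑ i ∈ s,
      (b * p i * b - (k * lam i) • (b * p i + p i * b) + ((k * lam i) * (k * lam i)) • p i) :=
    Finset.sum_nonneg step
  have e1 : ∑ i ∈ s, b * p i * b = b * (∑ i ∈ s, p i) * b := by
    rw [← Finset.sum_mul, ← Finset.mul_sum]
  have e2a : ∑ i ∈ s, (k * lam i) • (b * p i) = k • (b * b) := by
    calc ∑ i ∈ s, (k * lam i) • (b * p i) = b * ∑ i ∈ s, (k * lam i) • p i := by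
          rw [Finset.mul_sum]
          exact Finset.sum_congr rfl fun i _ => (mul_smul_comm _ _ _).symm
      _ = b * (k • b) := by
          rw [hbdef, Finset.smul_sum]
          congr 1
          exact Finset.sum_congr rfl fun i _ => by rw [smul_smul]
      _ = k • (b * b) := (mul_smul_comm _ _ _)
  have e2b : ∑ i ∈ s, (k * lam i) • (p i * b) = k • (b * b) := by
    calc ∑ i ∈ s, (k * lam i) • (p i * b) = (∑ i ∈ s, (k * lam i) • p i) * b := by
          rw [Finset.sum_mul]
          exact Finset.sum_congr rfl fun i _ => (smul_mul_assoc _ _ _).symm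
      _ = (k • b) * b := by
          rw [hbdef, Finset.smul_sum]
          congr 1
          exact Finset.sum_congr rfl fun i _ => by rw [smul_smul]
      _ = k • (b * b) := (smul_mul_assoc _ _ _)
  have e3 : ∑ i ∈ s, ((k * lam i) * (k * lam i)) • p i
      = (k * k) • ∑ i ∈ s, (lam i) ^ 2 • p i := by
    rw [Finset.smul_sum]
    exact Finset.sum_congr rfl fun i _ => by rw [smul_smul]; ring_nf
  set q := ∑ i ∈ s, (lam i) ^ 2 • p i with hq
  have hexp : 0 ≤ b * (∑ i ∈ s, p i) * b - k • (b * b + b * b) + (k * k) • q := by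
    have := hsum2
    rw [Finset.sum_add_distrib, Finset.sum_sub_distrib, e1, e3] at this
    have e2 : ∑ i ∈ s, (k * lam i) • (b * p i + p i * b) = k • (b * b + b * b) := by
      rw [Finset.sum_congr rfl fun i (_ : i ∈ s) => smul_add (k * lam i) (b * p i) (p i * b),
        Finset.sum_add_distrib, e2a, e2b, smul_add]
    rwa [e2] at this
  have hconj : b * (∑ i ∈ s, p i) * b ≤ k • (b * b) := by
    have h1 : b * (∑ i ∈ s, p i) * star b ≤ b * (k • 1) * star b :=
      star_right_conjugate_le_conjugate hsum b
    rw [hb] at h1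
    calc b * (∑ i ∈ s, p i) * b ≤ b * (k • 1) * b := h1
      _ = k • (b * b) := by rw [mul_smul_comm, mul_one, smul_mul_assoc]
  have h4 : k • (b * b + b * b) ≤ b * (∑ i ∈ s, p i) * b + (k * k) • q := by
    have h := hexp
    rw [show b * (∑ i ∈ s, p i) * b - k • (b * b + b * b) + (k * k) • q
        = (b * (∑ i ∈ s, p i) * b + (k * k) • q) - k • (b * b + b * b) from by abel] at h
    exact sub_nonneg.mp h
  have final : k • (b * b) ≤ (k * k) • q := by
    have h5 : k • (b * b) + k • (b * b) ≤ k • (b * b) + (k * k) • q := by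
      calc k • (b * b) + k • (b * b) = k • (b * b + b * b) := (smul_add _ _ _).symm
        _ ≤ b * (∑ i ∈ s, p i) * b + (k * k) • q := h4
        _ ≤ k • (b * b) + (k * k) • q := add_le_add_left hconj _
    exact le_of_add_le_add_left h5
  have hfin : b * b ≤ k • q := by
    have h6 : k • (b * b) ≤ k • (k • q) := by rwa [smul_smul]
    exact rsmul_cancel hk h6
  rw [sq]
  exact hfin

end Helpers

noncomputable def plam (R : ℝ) (n : ℕ) (i : ℕ) : ℝ := -R + i * (2 * R / n)

noncomputable def pe (R : ℝ) (n : ℕ) (i : ℕ) (t : ℝ) : ℝ :=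
  max 0 (1 - |t - plam R n i| / (2 * R / n))

lemma pe_nonneg (R : ℝ) (n i : ℕ) (t : ℝ) : 0 ≤ pe R n i t := le_max_left _ _

lemma pe_continuous (R : ℝ) (n i : ℕ) : Continuous fun t => pe R n i t := by
  unfold pe
  fun_prop

lemma partition (R : ℝ) (hR : 0 < R) (n : ℕ) (hn : 0 < n) (t : ℝ)
    (htl : -R ≤ t) (htr : t ≤ R) (c : ℕ → ℝ) :
    ∃ j : ℕ, j + 1 ≤ n ∧ ∃ u : ℝ, 0 ≤ u ∧ u ≤ 1 ∧ t = plam R n j + u * (2 * R / n) ∧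
      plam R n (j + 1) = plam R n j + 2 * R / n ∧
      ∑ i ∈ Finset.range (n + 1), c i * pe R n i t = c j * (1 - u) + c (j + 1) * u := by
  have hn' : (0:ℝ) < n := by exact_mod_cast hn
  set h : ℝ := 2 * R / n with hhdef
  have hh : 0 < h := by positivity
  set j := min (n - 1) ⌊(t + R) / h⌋₊ with hjdef
  have hj1 : j + 1 ≤ n := by omega
  have hjle : (j : ℝ) ≤ (t + R) / h := by
    refine le_trans ?_ (Nat.floor_le (div_nonneg (by linarith) hh.le))
    exact_mod_cast min_le_right (n-1) _
  have hjl : plam R n j ≤ t := by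
    have h1 : (j : ℝ) * h ≤ t + R := (le_div_iff₀ hh).mp hjle
    unfold plam
    rw [← hhdef]
    linarith
  have hnh : (n : ℝ) * h = 2 * R := by
    rw [hhdef]; field_simp
  have hjr : t ≤ plam R n j + h := by
    rcases le_or_gt (⌊(t + R) / h⌋₊) (n - 1) with hc | hc
    · have hjeq : j = ⌊(t + R) / h⌋₊ := min_eq_right hc
      have h2 : (t + R) / h < (j : ℝ) + 1 := by
        rw [hjeq]; push_cast; exact Nat.lt_floor_add_one _
      have h3 : t + R < ((j : ℝ) + 1) * h := (div_lt_iff₀ hh).mp h2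
      unfold plam; rw [← hhdef]; linarith
    · have hjeq : j = n - 1 := min_eq_left hc.le
      have hcast : ((n - 1 : ℕ) : ℝ) = (n : ℝ) - 1 := by
        rw [Nat.cast_sub hn]; norm_num
      unfold plam; rw [← hhdef, hjeq, hcast]
      nlinarith
  set u := (t - plam R n j) / h with hudef
  have hu0 : 0 ≤ u := div_nonneg (sub_nonneg.2 hjl) hh.le
  have hu1 : u ≤ 1 := (div_le_one hh).2 (by linarith)
  have ht' : t = plam R n j + u * h := by
    rw [hudef, div_mul_cancel₀ _ hh.ne']; ring
  have hlam1 : plam R n (j + 1) = plam R n j + h := by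
    unfold plam; rw [← hhdef]; push_cast; ring
  have hpej : pe R n j t = 1 - u := by
    unfold pe
    rw [← hhdef, abs_of_nonneg (sub_nonneg.2 hjl), ← hudef]
    exact max_eq_right (by linarith)
  have hpej1 : pe R n (j + 1) t = u := by
    unfold pe
    rw [← hhdef, hlam1, abs_of_nonpos (by linarith)]
    rw [show 1 - -(t - (plam R n j + h)) / h = (t - plam R n j) / h from by field_simp; ring]
    rw [← hudef]
    exact max_eq_right hu0
  have hvanish : ∀ i ∈ Finset.range (n + 1), i ≠ j ∧ i ≠ j + 1 → c i * pe R n i t = 0 := by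
    rintro i hi ⟨hij, hij1⟩
    suffices hz : pe R n i t = 0 by rw [hz, mul_zero]
    have key : h ≤ |t - plam R n i| := by
      rcases lt_or_gt_of_ne hij with hilt | higt
      · have hcast : (i : ℝ) + 1 ≤ (j : ℝ) := by exact_mod_cast hilt
        have : h ≤ t - plam R n i := by
          unfold plam at hjl ⊢; rw [← hhdef] at hjl ⊢; nlinarith
        exact le_trans this (le_abs_self _)
      · have hige : j + 2 ≤ i := by omega
        have hcast : (j : ℝ) + 2 ≤ (i : ℝ) := by exact_mod_cast hige
        have : h ≤ plam R n i - t := by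
          unfold plam at hjr ⊢; rw [← hhdef] at hjr ⊢; nlinarith
        calc h ≤ plam R n i - t := this
          _ ≤ |plam R n i - t| := le_abs_self _
          _ = |t - plam R n i| := abs_sub_comm _ _
    unfold pe
    rw [← hhdef]
    refine max_eq_left ?_
    have : 1 ≤ |t - plam R n i| / h := (one_le_div hh).2 key
    linarith
  have hsum : ∑ i ∈ Finset.range (n + 1), c i * pe R n i t
      = c j * pe R n j t + c (j + 1) * pe R n (j + 1) t :=
    Finset.sum_eq_add_of_mem j (j + 1) (Finset.mem_range.2 (by omega))
      (Finset.mem_range.2 (by omega)) (by omega) hvanish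
  exact ⟨j, hj1, u, hu0, hu1, ht', hlam1, by rw [hsum, hpej, hpej1]⟩

section Kadison

variable {M N : Type*} [CStarAlgebra M] [CStarAlgebra N]
    [PartialOrder M] [StarOrderedRing M] [PartialOrder N] [StarOrderedRing N]

lemma phi_real_smul (φ : M →L[ℂ] N) (r : ℝ) (m : M) : φ (r • m) = r • φ m := by
  rw [← Complex.coe_smul, map_smul, Complex.coe_smul]

lemma phi_mono (φ : M →L[ℂ] N) (hpos : ∀ a : M, 0 ≤ a → 0 ≤ φ a)
    {u v : M} (huv : u ≤ v) : φ u ≤ φ v := by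
  have := hpos (v - u) (sub_nonneg.2 huv)
  rw [map_sub] at this
  exact sub_nonneg.1 this

lemma phi_sa (φ : M →L[ℂ] N) (hpos : ∀ a : M, 0 ≤ a → 0 ≤ φ a)
    {a : M} (ha : IsSelfAdjoint a) : IsSelfAdjoint (φ a) := by
  have h1 : (0:M) ≤ ‖a‖ • 1 + a := by
    have h := ha.neg_algebraMap_norm_le_self
    rw [Algebra.algebraMap_eq_smul_one, ← sub_nonneg, sub_neg_eq_add, add_comm] at h
    exact h
  have h2 : (0:M) ≤ ‖a‖ • 1 - a := by
    have h := ha.le_algebraMap_norm_self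
    rw [Algebra.algebraMap_eq_smul_one] at h
    exact sub_nonneg.2 h
  have hp := IsSelfAdjoint.of_nonneg (hpos _ h1)
  have hq := IsSelfAdjoint.of_nonneg (hpos _ h2)
  have hdecomp : φ a = (1/2 : ℝ) • (φ (‖a‖ • 1 + a) - φ (‖a‖ • 1 - a)) := by
    rw [← map_sub, show (‖a‖ • 1 + a) - (‖a‖ • 1 - a) = (2:ℝ) • a from by
      rw [two_smul]; abel, phi_real_smul φ, smul_smul]
    norm_num
  rw [IsSelfAdjoint, hdecomp, star_smul, star_trivial, star_sub, hp.star_eq, hq.star_eq]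

lemma kadison [Nontrivial M] (φ : M →L[ℂ] N) (hpos : ∀ a : M, 0 ≤ a → 0 ≤ φ a)
    (hφ : 0 < ‖φ‖) {a : M} (ha : IsSelfAdjoint a) :
    φ a * φ a ≤ ‖φ‖ • φ (a * a) := by
  set k := ‖φ‖ with hkdef
  by_cases haz : a = 0
  · subst haz
    simp
  have hR : 0 < ‖a‖ := norm_pos_iff.2 haz
  set R := ‖a‖ with hRdef
  have hφ1 : φ 1 ≤ k • 1 := by
    have h0 : (0:N) ≤ φ 1 := hpos 1 zero_le_one
    have hsa := IsSelfAdjoint.of_nonneg h0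
    have h1 : φ 1 ≤ ‖φ 1‖ • 1 := by
      have := hsa.le_algebraMap_norm_self
      rwa [Algebra.algebraMap_eq_smul_one] at this
    refine h1.trans ?_
    have hle : ‖φ 1‖ ≤ k := by simpa using φ.le_opNorm 1
    have h2 := rsmul_nonneg (sub_nonneg.2 hle) (zero_le_one (α := N))
    rw [sub_smul] at h2
    exact sub_nonneg.1 h2
  have hspec : ∀ t ∈ spectrum ℝ a, -R ≤ t ∧ t ≤ R := by
    intro t ht
    have habs : |t| ≤ R := by
      simpa [Real.norm_eq_abs] using spectrum.norm_le_norm_of_mem ht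
    exact ⟨neg_le_of_abs_le habs, le_of_abs_le habs⟩
  have main : ∀ n : ℕ, 0 < n →
      φ a * φ a ≤ k • φ (a * a) + (k * k * ((2*R/n) * (2*R/n))) • 1 := by
    intro n hn
    set h : ℝ := 2 * R / n with hhdef
    set p : ℕ → N := fun i => φ (cfc (pe R n i) a) with hpdef
    have hcont : ∀ i, ContinuousOn (pe R n i) (spectrum ℝ a) :=
      fun i => (pe_continuous R n i).continuousOn
    have hpnn : ∀ i ∈ Finset.range (n+1), 0 ≤ p i :=
      fun i _ => hpos _ (cfc_nonneg fun t _ => pe_nonneg R n i t)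
    have hS0 : ∑ i ∈ Finset.range (n+1), p i = φ 1 := by
      rw [hpdef, ← map_sum, ← cfc_sum (fun i => pe R n i) a _ (fun i _ => hcont i)]
      congr 1
      rw [← cfc_one (R := ℝ) a ha]
      refine cfc_congr fun t ht => ?_
      obtain ⟨j, hj1, u, hu0, hu1, ht', hlam1, hsum⟩ :=
        partition R hR n hn t (hspec t ht).1 (hspec t ht).2 (fun _ => 1)
      simp only [one_mul] at hsum
      rw [Finset.sum_apply]
      simp only [Pi.one_apply]
      rw [hsum]; ring
    have hS1 : φ a = ∑ i ∈ Finset.range (n+1), plam R n i • p i := by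
      have e1 : ∀ i ∈ Finset.range (n+1),
          plam R n i • p i = φ (cfc (fun t => plam R n i * pe R n i t) a) := by
        intro i _
        rw [hpdef, cfc_const_mul (plam R n i) (pe R n i) a (hcont i), phi_real_smul]
      rw [Finset.sum_congr rfl e1, ← map_sum,
        ← cfc_sum (fun i t => plam R n i * pe R n i t) a _
          (fun i _ => ((continuous_const.mul (pe_continuous R n i)).continuousOn))]
      congr 1
      conv_lhs => rw [← cfc_id ℝ a ha]
      refine cfc_congr fun t ht => ?_
      obtain ⟨j, hj1, u, hu0, hu1, ht', hlam1, hsum⟩ :=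
        partition R hR n hn t (hspec t ht).1 (hspec t ht).2 (plam R n)
      rw [Finset.sum_apply, hsum, ht', hlam1]
      simp only [id_eq]
      ring
    have hS2le : cfc (fun t => ∑ i ∈ Finset.range (n+1), plam R n i ^ 2 * pe R n i t) a
        ≤ a * a + (h * h) • 1 := by
      have e2 : a * a + (h * h) • 1 = cfc (fun t : ℝ => t ^ 2 + h * h) a := by
        rw [cfc_add (a := a) (fun t : ℝ => t ^ 2) (fun _ => h * h)
            (by fun_prop) (by fun_prop), cfc_pow_id a 2 ha, cfc_const (h*h) a ha,
          Algebra.algebraMap_eq_smul_one, sq]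
      rw [e2]
      refine cfc_mono fun t ht => ?_
      obtain ⟨j, hj1, u, hu0, hu1, ht', hlam1, hsum⟩ :=
        partition R hR n hn t (hspec t ht).1 (hspec t ht).2 (fun i => plam R n i ^ 2)
      rw [hsum, ht', hlam1]
      nlinarith [sq_nonneg (plam R n j), sq_nonneg u, sq_nonneg (1 - u)]
    have hS2 : ∑ i ∈ Finset.range (n+1), (plam R n i) ^ 2 • p i
        = φ (cfc (fun t => ∑ i ∈ Finset.range (n+1), plam R n i ^ 2 * pe R n i t) a) := by
      have e1 : ∀ i ∈ Finset.range (n+1),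
          (plam R n i) ^ 2 • p i = φ (cfc (fun t => plam R n i ^ 2 * pe R n i t) a) := by
        intro i _
        rw [hpdef, cfc_const_mul (plam R n i ^ 2) (pe R n i) a (hcont i), phi_real_smul]
      rw [Finset.sum_congr rfl e1, ← map_sum,
        ← cfc_sum (fun i t => plam R n i ^ 2 * pe R n i t) a _
          (fun i _ => ((continuous_const.mul (pe_continuous R n i)).continuousOn))]
      congr 1
      refine cfc_congr fun t ht => ?_
      rw [Finset.sum_apply]
    have hkey := key_cs (n := n + 1) p (plam R n) hφ hpnn (by rw [hS0]; exact hφ1)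
    calc φ a * φ a = (∑ i ∈ Finset.range (n+1), plam R n i • p i) ^ 2 := by rw [← hS1, sq]
      _ ≤ k • ∑ i ∈ Finset.range (n+1), (plam R n i) ^ 2 • p i := hkey
      _ ≤ k • φ (a * a) + (k * k * (h * h)) • 1 := by
          rw [hS2]
          have hstep : φ (cfc (fun t => ∑ i ∈ Finset.range (n+1), plam R n i ^ 2 * pe R n i t) a)
              ≤ φ (a * a) + (h * h) • (k • 1) := by
            refine le_trans (phi_mono φ hpos hS2le) ?_
            rw [map_add, phi_real_smul]
            exact add_le_add_right (rsmul_mono (by positivity) hφ1) _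
          refine le_trans (rsmul_mono (le_of_lt hφ) hstep) ?_
          refine le_of_eq ?_
          rw [smul_add, smul_smul, smul_smul]
          congr 1
          ring
  have tend : Filter.Tendsto
      (fun n : ℕ => k • φ (a*a) + (k * k * ((2*R/(n+1 : ℕ)) * (2*R/(n+1 : ℕ)))) • (1:N) - φ a * φ a)
      Filter.atTop (nhds (k • φ (a*a) - φ a * φ a)) := by
    have h1 : Filter.Tendsto (fun n : ℕ => 2*R/((n:ℝ)+1)) Filter.atTop (nhds 0) := by
      have := tendsto_one_div_add_atTop_nhds_zero_nat.const_mul (2*R)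
      simpa [div_eq_mul_inv, mul_comm, mul_assoc, one_div] using this
    have h2 : Filter.Tendsto (fun n : ℕ => k * k * ((2*R/((n:ℝ)+1)) * (2*R/((n:ℝ)+1))))
        Filter.atTop (nhds 0) := by
      have := (h1.mul h1).const_mul (k * k)
      simpa using this
    have h3 : Filter.Tendsto (fun n : ℕ => (k * k * ((2*R/((n:ℝ)+1)) * (2*R/((n:ℝ)+1)))) • (1:N))
        Filter.atTop (nhds 0) := by
      have := h2.smul_const (1:N)
      simpa using this
    have h4 := (tendsto_const_nhds (x := k • φ (a*a)) (f := Filter.atTop (α := ℕ))).add h3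
    rw [add_zero] at h4
    have h5 := h4.sub (tendsto_const_nhds (x := φ a * φ a) (f := Filter.atTop (α := ℕ)))
    convert h5 using 2 with n
    push_cast
    ring_nf
  have mem : k • φ (a*a) - φ a * φ a ∈ {z : N | 0 ≤ z} := by
    refine CStarAlgebra.isClosed_nonneg.mem_of_tendsto tend
      (Filter.Eventually.of_forall fun n => ?_)
    have h6 := main (n+1) (Nat.succ_pos n)
    simp only [Set.mem_setOf_eq]
    rw [sub_nonneg]
    convert h6 using 4 <;> push_cast <;> ring
  exact sub_nonneg.1 mem

end Kadison


lemma jordan_decomp {A : Type*} [CStarAlgebra A] (a b : A) (ha : star a = a) (hb : star b = b) :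
    (1/2 : ℂ) • (star (a + Complex.I • b) * (a + Complex.I • b)
      + (a + Complex.I • b) * star (a + Complex.I • b)) = a * a + b * b := by
  have hstar : star (a + Complex.I • b) = a - Complex.I • b := by
    rw [star_add, star_smul, ha, hb, Complex.star_def, Complex.conj_I, neg_smul, ← sub_eq_add_neg]
  rw [hstar]
  have e1 : (a - Complex.I • b) * (a + Complex.I • b)
      = (a * a + b * b) + (Complex.I • (a * b) - Complex.I • (b * a)) := by
    simp only [mul_add, sub_mul, smul_mul_assoc, mul_smul_comm, smul_smul,
      Complex.I_mul_I, neg_one_smul, one_smul]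
    match_scalars <;> simp [Complex.I_sq] <;> ring
  have e2 : (a + Complex.I • b) * (a - Complex.I • b)
      = (a * a + b * b) - (Complex.I • (a * b) - Complex.I • (b * a)) := by
    simp only [mul_sub, add_mul, smul_mul_assoc, mul_smul_comm, smul_smul,
      Complex.I_mul_I, neg_one_smul, one_smul]
    match_scalars <;> simp [Complex.I_sq] <;> ring
  rw [e1, e2, add_add_sub_cancel]
  module


/-- Ozawa's Schwarz-type inequality for general (not necessarily contractive)
positive maps between unital C*-algebras:
`φ(x)* ∘ φ(x) ≤ ‖φ‖ · φ(x* ∘ x)` with the Jordan product `a ∘ b = (ab + ba)/2`. -/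
theorem stmt_1 {M N : Type*} [CStarAlgebra M] [CStarAlgebra N]
    [PartialOrder M] [StarOrderedRing M] [PartialOrder N] [StarOrderedRing N]
    (φ : M →L[ℂ] N)
    (hpos : ∀ a : M, 0 ≤ a → 0 ≤ φ a) (x : M) :
    (1/2 : ℂ) • (star (φ x) * φ x + φ x * star (φ x)) ≤
      ‖φ‖ • φ ((1/2 : ℂ) • (star x * x + x * star x)) := by
  rcases subsingleton_or_nontrivial M with hM | hM
  · have hx0 : x = (0 : M) := Subsingleton.elim _ _
    simp [hx0]
  rcases eq_or_lt_of_le (norm_nonneg φ) with hφ0 | hφpos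
  · have hz : φ = 0 := by rwa [eq_comm, norm_eq_zero] at hφ0
    simp [hz]
  set a := ((1/2 : ℂ)) • (x + star x) with hadef
  set b := ((Complex.I/2 : ℂ)) • (star x - x) with hbdef
  have ha : star a = a := by
    rw [hadef, star_smul, star_add, star_star]
    rw [show star ((1/2 : ℂ)) = (1/2 : ℂ) from by simp, add_comm]
  have hb : star b = b := by
    rw [hbdef, star_smul, star_sub, star_star]
    rw [show star ((Complex.I/2 : ℂ)) = -(Complex.I/2 : ℂ) from by
      simp [Complex.star_def, Complex.conj_I, neg_div]]
    rw [neg_smul, ← smul_neg, neg_sub]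
  have hx : x = a + Complex.I • b := by
    rw [hadef, hbdef, smul_smul]
    match_scalars <;> norm_num [mul_div_assoc', Complex.I_mul_I]
  have hφx : φ x = φ a + Complex.I • φ b := by rw [hx, map_add, map_smul, map_smul]
  have hlhs : (1/2 : ℂ) • (star (φ x) * φ x + φ x * star (φ x)) = φ a * φ a + φ b * φ b := by
    rw [hφx]
    exact jordan_decomp (φ a) (φ b) (phi_sa φ hpos ha).star_eq (phi_sa φ hpos hb).star_eq
  have hrhs : (1/2 : ℂ) • (star x * x + x * star x) = a * a + b * b := by
    conv_lhs => rw [hx]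
    exact jordan_decomp a b ha hb
  rw [hlhs, hrhs, map_add, smul_add]
  exact add_le_add (kadison φ hpos hφpos ha) (kadison φ hpos hφpos hb)
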